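/- Let H be a Hermitian operator on ℂⁿ with orthonormal eigenbasis v₁, …, v_n and real eigenvalues λ₁, …, λ_n, and let ψ₀, f be unit vectors in ℂⁿ. Then the time-averaged transition probability converges: lim_{T→∞} (1/T) ∫₀^T |⟨f, exp(−itH) ψ₀⟩|² dt = Σ_{(i,l) : λ_i = λ_l} ⟨v_l, f⟩ ⟨f, v_i⟩ ⟨v_i, ψ₀⟩ ⟨ψ₀, v_l⟩, where the sum runs over all ordered pairs (i,l) with λ_i = λ_l. -/

import Mathlib

open Finset Matrix Complex MeasureTheory Filter

lemma exp_mulVec_eig {n : ℕ} (A : Matrix (Fin n) (Fin n) ℂ) (u : Fin n → ℂ) (μ : ℂ)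
    (h : A.mulVec u = μ • u) :
    (NormedSpace.exp A).mulVec u = Complex.exp μ • u := by
  letI : NormedRing (Matrix (Fin n) (Fin n) ℂ) := Matrix.linftyOpNormedRing
  letI : NormedAlgebra ℂ (Matrix (Fin n) (Fin n) ℂ) := Matrix.linftyOpNormedAlgebra
  have hpow : ∀ k : ℕ, (A ^ k).mulVec u = μ ^ k • u := by
    intro k
    induction k with
    | zero => simp [Matrix.one_mulVec]
    | succ k ih =>
      rw [pow_succ, ← Matrix.mulVec_mulVec, h, Matrix.mulVec_smul, ih, smul_smul, pow_succ]
      ring_nf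
  let L : Matrix (Fin n) (Fin n) ℂ →ₗ[ℂ] (Fin n → ℂ) :=
    { toFun := fun M => M.mulVec u
      map_add' := fun M N => Matrix.add_mulVec M N u
      map_smul' := fun c M => Matrix.smul_mulVec c M u }
  have hL : Continuous L := L.continuous_of_finiteDimensional
  have hs : Summable (fun k : ℕ => (k.factorial⁻¹ : ℂ) • A ^ k) := NormedSpace.expSeries_summable' A
  have hsum2 : Summable (fun k : ℕ => (k.factorial⁻¹ : ℂ) * μ ^ k) := by
    simpa [smul_eq_mul] using NormedSpace.expSeries_summable' (𝕂 := ℂ) μ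
  calc (NormedSpace.exp A).mulVec u
      = L (∑' k : ℕ, (k.factorial⁻¹ : ℂ) • A ^ k) := by rw [NormedSpace.exp_eq_tsum ℂ]; rfl
    _ = ∑' k : ℕ, L ((k.factorial⁻¹ : ℂ) • A ^ k) :=
        ((hs.hasSum.map L hL).tsum_eq).symm
    _ = ∑' k : ℕ, ((k.factorial⁻¹ : ℂ) * μ ^ k) • u := by
        refine tsum_congr fun k => ?_
        show ((k.factorial⁻¹ : ℂ) • A ^ k).mulVec u = _
        rw [Matrix.smul_mulVec, hpow, smul_smul]
    _ = (∑' k : ℕ, (k.factorial⁻¹ : ℂ) * μ ^ k) • u := hsum2.tsum_smul_const u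
    _ = Complex.exp μ • u := by
        rw [Complex.exp_eq_exp_ℂ, NormedSpace.exp_eq_tsum ℂ]
        simp [smul_eq_mul]

lemma avg_exp_tendsto (r : ℝ) :
    Tendsto (fun T : ℝ => (1 / T : ℂ) * ∫ t in (0:ℝ)..T, Complex.exp ((-(Complex.I * r)) * t))
      atTop (nhds (if r = 0 then 1 else 0)) := by
  by_cases hr : r = 0
  · simp only [hr, if_pos rfl, Complex.ofReal_zero, mul_zero, neg_zero, zero_mul,
      Complex.exp_zero]
    have h : ∀ᶠ T : ℝ in atTop, (1 : ℂ) = (1 / T : ℂ) * ∫ t in (0:ℝ)..T, (1:ℂ) := by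
      filter_upwards [eventually_gt_atTop 0] with T hT
      rw [intervalIntegral.integral_const]
      rw [sub_zero, Complex.real_smul, mul_one, one_div, inv_mul_cancel₀]
      exact_mod_cast hT.ne'
    exact Tendsto.congr' h tendsto_const_nhds
  · have hμ : (-(Complex.I * r) : ℂ) ≠ 0 := by
      simp [Complex.ofReal_eq_zero, hr, Complex.I_ne_zero]
    rw [if_neg hr]
    have h1 : ∀ s : ℝ, ‖Complex.exp ((-(Complex.I * r)) * s)‖ = 1 := by
      intro s
      rw [Complex.norm_exp]
      have : ((-(Complex.I * (r:ℂ))) * (s:ℝ)).re = 0 := by simp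
      rw [this, Real.exp_zero]
    refine squeeze_zero_norm (fun T => ?_) ?_
      (a := fun T : ℝ => ‖(1/(T:ℂ))‖ * (2 / ‖(-(Complex.I * r) : ℂ)‖))
    · have hb : ‖Complex.exp ((-(Complex.I * r)) * (T:ℝ)) -
          Complex.exp ((-(Complex.I * r)) * ((0:ℝ):ℝ))‖ ≤ 2 := by
        refine (norm_sub_le _ _).trans ?_
        rw [h1, h1]; norm_num
      have hpos : (0:ℝ) < ‖(-(Complex.I * (r:ℂ)) : ℂ)‖ := by rw [norm_pos_iff]; exact hμ
      have hint : ‖∫ t in (0:ℝ)..T, Complex.exp ((-(Complex.I * r)) * t)‖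
          ≤ 2 / ‖(-(Complex.I * (r:ℂ)) : ℂ)‖ := by
        rw [integral_exp_mul_complex hμ, norm_div]
        exact (div_le_div_iff_of_pos_right hpos).mpr hb
      calc ‖(1/(T:ℂ)) * ∫ t in (0:ℝ)..T, Complex.exp ((-(Complex.I * r)) * t)‖
          = ‖(1/(T:ℂ))‖ * ‖∫ t in (0:ℝ)..T, Complex.exp ((-(Complex.I * r)) * t)‖ :=
            norm_mul _ _
        _ ≤ ‖(1/(T:ℂ))‖ * (2 / ‖(-(Complex.I * (r:ℂ)) : ℂ)‖) :=
            mul_le_mul_of_nonneg_left hint (norm_nonneg (1/(T:ℂ)))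
    · have h0 : Tendsto (fun T : ℝ => ‖(1/(T:ℂ))‖) atTop (nhds 0) := by
        have h2 : Tendsto (fun T : ℝ => |T|⁻¹) atTop (nhds 0) :=
          tendsto_inv_atTop_zero.comp (tendsto_abs_atTop_atTop)
        refine h2.congr fun T => ?_
        simp
      simpa using h0.mul_const (2 / ‖(-(Complex.I * r) : ℂ)‖)

set_option maxHeartbeats 1000000 in
/-- The time-averaged transition probability of a quantum walk
converges, as `T → ∞`, to the limiting distribution
`Σ_{(i,l): λ_i = λ_l} ⟨v_l,f⟩⟨f,v_i⟩⟨v_i,ψ₀⟩⟨ψ₀,v_l⟩`. -/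
theorem time_averaged_probability_tendsto_limiting_distribution
    (n : ℕ)
    (H : Matrix (Fin n) (Fin n) ℂ) (hH : H.IsHermitian)
    (v : Fin n → Fin n → ℂ)
    (horth : ∀ i j, ∑ x, (starRingEnd ℂ) (v i x) * v j x = if i = j then 1 else 0)
    (lam : Fin n → ℝ)
    (heig : ∀ j, H.mulVec (v j) = (lam j : ℂ) • v j)
    (ψ₀ f : Fin n → ℂ)
    (hψ₀ : ∑ x, ‖ψ₀ x‖ ^ 2 = 1)
    (hf : ∑ x, ‖f x‖ ^ 2 = 1) :
    Tendsto
      (fun T : ℝ => (((1 / T) * ∫ t in (0:ℝ)..T,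
          ‖∑ x, (starRingEnd ℂ) (f x) *
            ((NormedSpace.exp ((-(Complex.I * t)) • H)).mulVec ψ₀ x)‖ ^ 2 : ℝ) : ℂ))
      atTop
      (nhds (∑ i, ∑ l, if lam i = lam l then
          (∑ x, (starRingEnd ℂ) (v l x) * f x) *
          (∑ x, (starRingEnd ℂ) (f x) * v i x) *
          (∑ x, (starRingEnd ℂ) (v i x) * ψ₀ x) *
          (∑ x, (starRingEnd ℂ) (ψ₀ x) * v l x)
        else 0)) := by
  classical
  set c : Fin n → ℂ := fun j => ∑ x, (starRingEnd ℂ) (v j x) * ψ₀ x with hcdef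
  set b : Fin n → ℂ := fun j => ∑ x, (starRingEnd ℂ) (f x) * v j x with hbdef
  -- completeness of the eigenbasis
  have hVV : (Matrix.of v) * (Matrix.of v)ᴴ = (1 : Matrix (Fin n) (Fin n) ℂ) := by
    ext i j
    have h := congrArg (starRingEnd ℂ) (horth i j)
    rw [map_sum, apply_ite (starRingEnd ℂ), _root_.map_one, map_zero] at h
    simp only [_root_.map_mul, Complex.conj_conj] at h
    simpa [Matrix.mul_apply, Matrix.conjTranspose_apply, Matrix.one_apply] using h
  have hVV' : (Matrix.of v)ᴴ * (Matrix.of v) = 1 := mul_eq_one_comm.mp hVV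
  have hdelta : ∀ y x : Fin n,
      (∑ j, (starRingEnd ℂ) (v j y) * v j x) = if y = x then 1 else 0 := by
    intro y x
    have h := Matrix.ext_iff.mpr hVV' y x
    simpa [Matrix.mul_apply, Matrix.conjTranspose_apply, Matrix.one_apply] using h
  have hcomp : ∀ x, (∑ j, c j * v j x) = ψ₀ x := by
    intro x
    calc ∑ j, c j * v j x
        = ∑ j, ∑ y, (starRingEnd ℂ) (v j y) * ψ₀ y * v j x := by
          simp only [hcdef, Finset.sum_mul]
      _ = ∑ y, ∑ j, (starRingEnd ℂ) (v j y) * ψ₀ y * v j x := Finset.sum_comm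
      _ = ∑ y, (∑ j, (starRingEnd ℂ) (v j y) * v j x) * ψ₀ y := by
          refine Finset.sum_congr rfl fun y _ => ?_
          rw [Finset.sum_mul]
          exact Finset.sum_congr rfl fun j _ => by ring
      _ = ∑ y, (if y = x then 1 else 0) * ψ₀ y := by
          exact Finset.sum_congr rfl fun y _ => by rw [hdelta]
      _ = ψ₀ x := by simp
  -- action of the propagator on eigenvectors
  have hexpv : ∀ (t : ℝ) (j : Fin n),
      (NormedSpace.exp ((-(Complex.I * t)) • H)).mulVec (v j)
        = Complex.exp (-(Complex.I * (lam j : ℝ)) * t) • v j := by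
    intro t j
    refine exp_mulVec_eig _ _ _ ?_
    rw [Matrix.smul_mulVec, heig, smul_smul]
    congr 1
    ring
  -- the amplitude as a finite sum of exponentials
  have hg : ∀ t : ℝ,
      (∑ x, (starRingEnd ℂ) (f x) *
          ((NormedSpace.exp ((-(Complex.I * t)) • H)).mulVec ψ₀ x))
        = ∑ j, Complex.exp (-(Complex.I * (lam j : ℝ)) * t) * (b j * c j) := by
    intro t
    have hψ : ψ₀ = ∑ j, c j • v j := by
      funext x
      rw [Finset.sum_apply]
      simp only [Pi.smul_apply, smul_eq_mul]
      exact (hcomp x).symm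
    have hmv : (NormedSpace.exp ((-(Complex.I * t)) • H)).mulVec ψ₀
        = ∑ j, (c j * Complex.exp (-(Complex.I * (lam j : ℝ)) * t)) • v j := by
      conv_lhs => rw [hψ]
      rw [← Matrix.mulVecLin_apply, map_sum]
      refine Finset.sum_congr rfl fun j _ => ?_
      rw [LinearMap.map_smul, Matrix.mulVecLin_apply, hexpv t j, smul_smul]
    rw [hmv]
    calc ∑ x, (starRingEnd ℂ) (f x) *
          ((∑ j, (c j * Complex.exp (-(Complex.I * (lam j : ℝ)) * t)) • v j) x)
        = ∑ x, ∑ j, (c j * Complex.exp (-(Complex.I * (lam j : ℝ)) * t)) *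
            ((starRingEnd ℂ) (f x) * v j x) := by
          refine Finset.sum_congr rfl fun x _ => ?_
          rw [Finset.sum_apply, Finset.mul_sum]
          refine Finset.sum_congr rfl fun j _ => ?_
          simp only [Pi.smul_apply, smul_eq_mul]
          ring
      _ = ∑ j, ∑ x, (c j * Complex.exp (-(Complex.I * (lam j : ℝ)) * t)) *
            ((starRingEnd ℂ) (f x) * v j x) := Finset.sum_comm
      _ = ∑ j, Complex.exp (-(Complex.I * (lam j : ℝ)) * t) * (b j * c j) := by
          refine Finset.sum_congr rfl fun j _ => ?_
          rw [← Finset.mul_sum]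
          have : (∑ x, (starRingEnd ℂ) (f x) * v j x) = b j := rfl
          rw [this]
          ring
  -- the integrand as a double sum of exponentials
  have habs : ∀ t : ℝ,
      ((‖∑ x, (starRingEnd ℂ) (f x) *
          ((NormedSpace.exp ((-(Complex.I * t)) • H)).mulVec ψ₀ x)‖ ^ 2 : ℝ) : ℂ)
        = ∑ i, ∑ l, Complex.exp ((-(Complex.I * ((lam i - lam l : ℝ) : ℂ))) * t) *
            (b i * c i * ((starRingEnd ℂ) (b l) * (starRingEnd ℂ) (c l))) := by
    intro t
    set z : ℂ := ∑ x, (starRingEnd ℂ) (f x) *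
        ((NormedSpace.exp ((-(Complex.I * t)) • H)).mulVec ψ₀ x) with hz
    have h1 : ((‖z‖ ^ 2 : ℝ) : ℂ) = z * (starRingEnd ℂ) z := by
      rw [Complex.sq_norm]
      exact_mod_cast (Complex.mul_conj z).symm
    rw [h1, hz, hg t, map_sum, Finset.sum_mul_sum]
    refine Finset.sum_congr rfl fun i _ => Finset.sum_congr rfl fun l _ => ?_
    rw [_root_.map_mul, ← Complex.exp_conj]
    have h2 : (starRingEnd ℂ) (-(Complex.I * (lam l : ℝ)) * t)
        = (Complex.I * (lam l : ℝ)) * t := by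
      simp only [_root_.map_mul, map_neg, Complex.conj_I, Complex.conj_ofReal]
      ring
    rw [h2, mul_mul_mul_comm, ← Complex.exp_add, _root_.map_mul]
    have h3 : -(Complex.I * (lam i : ℝ)) * t + (Complex.I * (lam l : ℝ)) * t
        = (-(Complex.I * ((lam i - lam l : ℝ) : ℂ))) * t := by push_cast; ring
    rw [h3]
  -- rewrite the whole function
  have hfun : ∀ T : ℝ,
      (((1 / T) * ∫ t in (0:ℝ)..T,
          ‖∑ x, (starRingEnd ℂ) (f x) *
            ((NormedSpace.exp ((-(Complex.I * t)) • H)).mulVec ψ₀ x)‖ ^ 2 : ℝ) : ℂ)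
        = ∑ i, ∑ l,
            ((1 / T : ℂ) * ∫ t in (0:ℝ)..T,
              Complex.exp ((-(Complex.I * ((lam i - lam l : ℝ) : ℂ))) * t)) *
            (b i * c i * ((starRingEnd ℂ) (b l) * (starRingEnd ℂ) (c l))) := by
    intro T
    have hcont : ∀ (i l : Fin n), Continuous fun t : ℝ =>
        Complex.exp ((-(Complex.I * ((lam i - lam l : ℝ) : ℂ))) * t) *
          (b i * c i * ((starRingEnd ℂ) (b l) * (starRingEnd ℂ) (c l))) := by
      intro i l
      exact (Complex.continuous_exp.comp (continuous_const.mul Complex.continuous_ofReal)).mul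
        continuous_const
    have hIcast : ((∫ t in (0:ℝ)..T,
        ‖∑ x, (starRingEnd ℂ) (f x) *
          ((NormedSpace.exp ((-(Complex.I * t)) • H)).mulVec ψ₀ x)‖ ^ 2 : ℝ) : ℂ)
        = ∫ t in (0:ℝ)..T, ((‖∑ x, (starRingEnd ℂ) (f x) *
            ((NormedSpace.exp ((-(Complex.I * t)) • H)).mulVec ψ₀ x)‖ ^ 2 : ℝ) : ℂ) :=
      (RCLike.intervalIntegral_ofReal).symm
    rw [Complex.ofReal_mul, hIcast]
    rw [intervalIntegral.integral_congr (g := fun t =>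
        ∑ i, ∑ l, Complex.exp ((-(Complex.I * ((lam i - lam l : ℝ) : ℂ))) * t) *
          (b i * c i * ((starRingEnd ℂ) (b l) * (starRingEnd ℂ) (c l))))
        (fun t _ => habs t)]
    rw [intervalIntegral.integral_finset_sum (f := fun i t =>
        ∑ l, Complex.exp ((-(Complex.I * ((lam i - lam l : ℝ) : ℂ))) * t) *
          (b i * c i * ((starRingEnd ℂ) (b l) * (starRingEnd ℂ) (c l))))
      (fun i _ => ((continuous_finset_sum _ (fun l _ => hcont i l)).intervalIntegrable _ _))]
    rw [Finset.mul_sum]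
    have hT : ((1 / T : ℝ) : ℂ) = (1 / T : ℂ) := by push_cast; ring
    rw [hT]
    refine Finset.sum_congr rfl fun i _ => ?_
    rw [intervalIntegral.integral_finset_sum (f := fun l t =>
        Complex.exp ((-(Complex.I * ((lam i - lam l : ℝ) : ℂ))) * t) *
          (b i * c i * ((starRingEnd ℂ) (b l) * (starRingEnd ℂ) (c l))))
      (fun l _ => (hcont i l).intervalIntegrable _ _), Finset.mul_sum]
    refine Finset.sum_congr rfl fun l _ => ?_
    rw [intervalIntegral.integral_mul_const]
    ring
  refine Tendsto.congr (fun T => (hfun T).symm) ?_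
  refine tendsto_finset_sum _ fun i _ => tendsto_finset_sum _ fun l _ => ?_
  have hlim := (avg_exp_tendsto (lam i - lam l)).mul_const
    (b i * c i * ((starRingEnd ℂ) (b l) * (starRingEnd ℂ) (c l)))
  have heq : (if lam i - lam l = 0 then (1:ℂ) else 0) *
      (b i * c i * ((starRingEnd ℂ) (b l) * (starRingEnd ℂ) (c l)))
      = if lam i = lam l then
          (∑ x, (starRingEnd ℂ) (v l x) * f x) *
          (∑ x, (starRingEnd ℂ) (f x) * v i x) *
          (∑ x, (starRingEnd ℂ) (v i x) * ψ₀ x) *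
          (∑ x, (starRingEnd ℂ) (ψ₀ x) * v l x)
        else 0 := by
    by_cases h : lam i = lam l
    · rw [if_pos (by rw [h, sub_self]), if_pos h, one_mul]
      have hb1 : (starRingEnd ℂ) (b l) = ∑ x, (starRingEnd ℂ) (v l x) * f x := by
        simp only [hbdef, map_sum, _root_.map_mul, Complex.conj_conj]
        exact Finset.sum_congr rfl fun x _ => mul_comm _ _
      have hc1 : (starRingEnd ℂ) (c l) = ∑ x, (starRingEnd ℂ) (ψ₀ x) * v l x := by
        simp only [hcdef, map_sum, _root_.map_mul, Complex.conj_conj]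
        exact Finset.sum_congr rfl fun x _ => mul_comm _ _
      have hb2 : b i = ∑ x, (starRingEnd ℂ) (f x) * v i x := rfl
      have hc2 : c i = ∑ x, (starRingEnd ℂ) (v i x) * ψ₀ x := rfl
      rw [hb1, hc1, hb2, hc2]
      ring
    · rw [if_neg (sub_ne_zero.mpr h), if_neg h, zero_mul]
  rw [← heq]
  exact hlim
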